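/- Let 𝔤 be a quadratic Lie algebra and D, D' two generalized connections on 𝔤. Then D' has the same torsion and the same divergence as D (T_{D'} = T_D and div_{D'} = div_D) if and only if the trilinear form σ(a,b,c) = ⟨(D'−D)_a b, c⟩ belongs to Σ₀, that is: σ is skew-symmetric in its last two arguments, its cyclic sum σ(a,b,c)+σ(b,c,a)+σ(c,a,b) vanishes, and its contraction Σ_i σ(e_i, ẽ_i, ·) vanishes for a (hence any) basis {e_i} with ⟨·,·⟩-dual basis {ẽ_i}. (This is the Courant-algebroid-over-a-point case of the statement that the space of generalized connections with fixed torsion and fixed divergence is an affine space modelled on Σ₀.) -/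

import Mathlib

/-- On a quadratic Lie algebra, two generalized connections `D`, `D'` have
the same torsion and the same divergence iff `σ(a,b,c) = ⟨(D'−D)_a b, c⟩` lies in `Σ₀`:
skew in the last two arguments, vanishing cyclic sum, and vanishing contraction
`Σ_i σ(e_i, ẽ_i, ·) = 0`. -/
theorem statement_6
    {𝔤 : Type*} [LieRing 𝔤] [LieAlgebra ℝ 𝔤] [FiniteDimensional ℝ 𝔤]
    (B : 𝔤 →ₗ[ℝ] 𝔤 →ₗ[ℝ] ℝ)
    (hB_symm : ∀ x y, B x y = B y x)
    (hB_nondeg : ∀ x, (∀ y, B x y = 0) → x = 0)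
    (hB_inv : ∀ x y z, B ⁅x, y⁆ z = B x ⁅y, z⁆)
    (D D' : 𝔤 →ₗ[ℝ] 𝔤 →ₗ[ℝ] 𝔤)
    (hD_skew : ∀ e a b, B (D e a) b + B a (D e b) = 0)
    (hD'_skew : ∀ e a b, B (D' e a) b + B a (D' e b) = 0)
    {ι : Type*} [Fintype ι] [DecidableEq ι]
    (bb : Module.Basis ι ℝ 𝔤) (d : ι → 𝔤)
    (hd : ∀ i j, B (bb i) (d j) = if i = j then 1 else 0)
    (σ : 𝔤 → 𝔤 → 𝔤 → ℝ)
    (hσ : ∀ a b c, σ a b c = B ((D' - D) a b) c) :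
    ((∀ e₁ e₂ e₃ : 𝔤,
        B (D' e₁ e₂ - D' e₂ e₁ - ⁅e₁, e₂⁆) e₃ + B (D' e₃ e₁) e₂ =
        B (D e₁ e₂ - D e₂ e₁ - ⁅e₁, e₂⁆) e₃ + B (D e₃ e₁) e₂) ∧
      (∀ e : 𝔤, LinearMap.trace ℝ 𝔤 (D'.flip e) = LinearMap.trace ℝ 𝔤 (D.flip e))) ↔
    ((∀ a b c, σ a b c = - σ a c b) ∧
      (∀ a b c, σ a b c + σ b c a + σ c a b = 0) ∧
      (∀ c, ∑ i, σ (bb i) (d i) c = 0)) := by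
  have hσ' : ∀ a b c, σ a b c = B (D' a b) c - B (D a b) c := by
    intro a b c
    rw [hσ]
    simp [LinearMap.sub_apply, map_sub]
  have hskewσ : ∀ a b c, σ a b c = - σ a c b := by
    intro a b c
    have h1 := hD'_skew a b c
    have h2 := hD_skew a b c
    have h3 := hB_symm b (D' a c)
    have h4 := hB_symm b (D a c)
    rw [hσ' a b c, hσ' a c b]
    linarith
  have hTor : ∀ e₁ e₂ e₃ : 𝔤,
      (B (D' e₁ e₂ - D' e₂ e₁ - ⁅e₁, e₂⁆) e₃ + B (D' e₃ e₁) e₂ =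
        B (D e₁ e₂ - D e₂ e₁ - ⁅e₁, e₂⁆) e₃ + B (D e₃ e₁) e₂) ↔
      σ e₁ e₂ e₃ - σ e₂ e₁ e₃ + σ e₃ e₁ e₂ = 0 := by
    intro e₁ e₂ e₃
    simp only [map_sub, LinearMap.sub_apply]
    rw [hσ' e₁ e₂ e₃, hσ' e₂ e₁ e₃, hσ' e₃ e₁ e₂]
    constructor <;> intro h <;> linarith
  have hrepr : ∀ (x : 𝔤) (i : ι), bb.repr x i = B x (d i) := by
    intro x i
    conv_rhs => rw [← bb.sum_repr x]
    simp only [map_sum, map_smul, LinearMap.sum_apply, LinearMap.smul_apply, hd,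
      smul_eq_mul, mul_ite, mul_one, mul_zero]
    rw [Finset.sum_ite_eq' Finset.univ i (fun j => bb.repr x j)]
    simp
  have htr : ∀ (f : 𝔤 →ₗ[ℝ] 𝔤),
      LinearMap.trace ℝ 𝔤 f = ∑ i, B (f (bb i)) (d i) := by
    intro f
    rw [LinearMap.trace_eq_matrix_trace ℝ bb, Matrix.trace]
    refine Finset.sum_congr rfl fun i _ => ?_
    rw [Matrix.diag_apply, LinearMap.toMatrix_apply, hrepr]
  have hdivkey : ∀ e : 𝔤,
      LinearMap.trace ℝ 𝔤 (D'.flip e) - LinearMap.trace ℝ 𝔤 (D.flip e) =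
        ∑ i, σ (bb i) e (d i) := by
    intro e
    rw [htr, htr, ← Finset.sum_sub_distrib]
    refine Finset.sum_congr rfl fun i _ => ?_
    rw [hσ']
    simp [LinearMap.flip_apply]
  have hsumflip : ∀ c : 𝔤, ∑ i, σ (bb i) (d i) c = - ∑ i, σ (bb i) c (d i) := by
    intro c
    rw [← Finset.sum_neg_distrib]
    exact Finset.sum_congr rfl fun i _ => hskewσ (bb i) (d i) c
  constructor
  · rintro ⟨hT, hdiv⟩
    refine ⟨hskewσ, ?_, ?_⟩
    · intro a b c
      have h := (hTor a b c).mp (hT a b c)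
      have h2 := hskewσ b a c
      linarith
    · intro c
      have h := hdiv c
      have h3 := hdivkey c
      have h4 := hsumflip c
      have : ∑ i, σ (bb i) c (d i) = 0 := by linarith
      linarith
  · rintro ⟨hsk, hcyc, hcon⟩
    constructor
    · intro e₁ e₂ e₃
      rw [hTor e₁ e₂ e₃]
      have h := hcyc e₁ e₂ e₃
      have h2 := hsk e₂ e₁ e₃
      linarith
    · intro e
      have h := hdivkey e
      have h2 := hsumflip e
      have h3 := hcon e
      linarith
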